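/- Let c, m be positive integers, Z a real m×c matrix, and L a real c×c matrix with zero column sums (∀ j, ∑ i, L i j = 0) and nonpositive off-diagonal entries (L i j ≤ 0 for i ≠ j). Suppose x* : Fin m → ℝ is positive and satisfies L *ᵥ (fun i => Real.exp ((Zᵀ *ᵥ (fun k => Real.log (x* k))) i)) = 0 (a complex-balanced equilibrium). Then for every positive x : Fin m → ℝ, (fun k => Real.log (x k) − Real.log (x* k)) ⬝ᵥ (Z *ᵥ (L *ᵥ (fun i => Real.exp ((Zᵀ *ᵥ (fun k => Real.log (x k))) i)))) ≥ 0. (The Gibbs free energy G is nonincreasing along the dynamics ẋ = −Z L Exp(Zᵀ Ln x).) -/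
import Mathlib


open Matrix

lemma gibbs_aux (c : ℕ) (B : Matrix (Fin c) (Fin c) ℝ) (u : Fin c → ℝ)
    (hrow : ∀ i, ∑ j, B i j = 0) (hcolB : ∀ j, ∑ i, B i j = 0)
    (hoffB : ∀ i j, i ≠ j → B i j ≤ 0) :
    0 ≤ ∑ i, ∑ j, u i * B i j * Real.exp (u j) := by
  have h1 : ∑ i, ∑ j, B i j * (u j * Real.exp (u j)) = 0 := by
    rw [Finset.sum_comm]
    apply Finset.sum_eq_zero
    intro j _
    rw [← Finset.sum_mul, hcolB, zero_mul]
  have h2 : ∑ i, ∑ j, B i j * Real.exp (u j) = 0 := by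
    rw [Finset.sum_comm]
    apply Finset.sum_eq_zero
    intro j _
    rw [← Finset.sum_mul, hcolB, zero_mul]
  have h3 : ∑ i, ∑ j, B i j * Real.exp (u i) = 0 := by
    apply Finset.sum_eq_zero
    intro i _
    rw [← Finset.sum_mul, hrow, zero_mul]
  have key : ∑ i, ∑ j, u i * B i j * Real.exp (u j)
      = ∑ i, ∑ j, B i j * ((u i - u j) * Real.exp (u j) + Real.exp (u j) - Real.exp (u i)) := by
    have expand : ∀ i j : Fin c,
        B i j * ((u i - u j) * Real.exp (u j) + Real.exp (u j) - Real.exp (u i))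
        = u i * B i j * Real.exp (u j) - B i j * (u j * Real.exp (u j))
          + B i j * Real.exp (u j) - B i j * Real.exp (u i) := by
      intro i j; ring
    simp only [expand, Finset.sum_sub_distrib, Finset.sum_add_distrib, h1, h2, h3]
    ring
  rw [key]
  apply Finset.sum_nonneg
  intro i _
  apply Finset.sum_nonneg
  intro j _
  by_cases hij : i = j
  · subst hij; simp
  · have hb := hoffB i j hij
    have hconv : Real.exp (u j) * (1 + (u i - u j)) ≤ Real.exp (u i) := by
      have := Real.add_one_le_exp (u i - u j)
      calc Real.exp (u j) * (1 + (u i - u j)) ≤ Real.exp (u j) * Real.exp (u i - u j) := by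
            apply mul_le_mul_of_nonneg_left _ (Real.exp_nonneg _)
            linarith
        _ = Real.exp (u i) := by rw [← Real.exp_add]; ring_nf
    have hbr : (u i - u j) * Real.exp (u j) + Real.exp (u j) - Real.exp (u i) ≤ 0 := by
      nlinarith
    nlinarith [mul_nonneg (neg_nonneg.2 hb) (neg_nonneg.2 hbr)]

theorem gibbs_free_energy_nonincreasing
    (c m : ℕ) (hc : 0 < c) (hm : 0 < m)
    (Z : Matrix (Fin m) (Fin c) ℝ)
    (L : Matrix (Fin c) (Fin c) ℝ)
    (hcol : ∀ j, ∑ i, L i j = 0)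
    (hoff : ∀ i j, i ≠ j → L i j ≤ 0)
    (xs : Fin m → ℝ) (hxs : ∀ k, 0 < xs k)
    (hbal : L *ᵥ (fun i => Real.exp ((Zᵀ *ᵥ (fun k => Real.log (xs k))) i)) = 0) :
    ∀ x : Fin m → ℝ, (∀ k, 0 < x k) →
      (fun k => Real.log (x k) - Real.log (xs k)) ⬝ᵥ
        (Z *ᵥ (L *ᵥ (fun i => Real.exp ((Zᵀ *ᵥ (fun k => Real.log (x k))) i)))) ≥ 0 := by
  intro x hx
  set y : Fin c → ℝ := Zᵀ *ᵥ (fun k => Real.log (x k)) with hy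
  set ys : Fin c → ℝ := Zᵀ *ᵥ (fun k => Real.log (xs k)) with hys
  set B : Matrix (Fin c) (Fin c) ℝ := fun i j => L i j * Real.exp (ys j) with hB
  set u : Fin c → ℝ := fun i => y i - ys i with hu
  have hrowB : ∀ i, ∑ j, B i j = 0 := by
    intro i
    have := congrFun hbal i
    simpa [mulVec, dotProduct, B] using this
  have hcolB : ∀ j, ∑ i, B i j = 0 := by
    intro j
    simp only [hB, ← Finset.sum_mul, hcol, zero_mul]
  have hoffB : ∀ i j, i ≠ j → B i j ≤ 0 := by
    intro i j hij
    exact mul_nonpos_of_nonpos_of_nonneg (hoff i j hij) (Real.exp_nonneg _)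
  have hmain := gibbs_aux c B u hrowB hcolB hoffB
  have hrewrite : (fun k => Real.log (x k) - Real.log (xs k)) ⬝ᵥ
        (Z *ᵥ (L *ᵥ (fun i => Real.exp (y i))))
      = ∑ i, ∑ j, u i * B i j * Real.exp (u j) := by
    have hμ : (fun k => Real.log (x k) - Real.log (xs k))
        = (fun k => Real.log (x k)) - (fun k => Real.log (xs k)) := rfl
    rw [dotProduct_mulVec, ← Matrix.mulVec_transpose, hμ, Matrix.mulVec_sub]
    have : (Zᵀ *ᵥ fun k => Real.log (x k)) - (Zᵀ *ᵥ fun k => Real.log (xs k)) = u := by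
      funext i; simp [u, y, ys]
    rw [this]
    simp only [dotProduct, mulVec]
    apply Finset.sum_congr rfl
    intro i _
    rw [Finset.mul_sum]
    apply Finset.sum_congr rfl
    intro j _
    have : Real.exp (y j) = Real.exp (ys j) * Real.exp (u j) := by
      rw [← Real.exp_add]; congr 1; simp [u]
    simp only [dotProduct, this, B]
    ring
  rw [ge_iff_le, hrewrite]
  exact hmain
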